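/- Let (X,d) be a compact metric space and μ a Borel probability measure with full support. Suppose A : X → X is measurable with A_#μ = μ and d(Ax, Ax') = d(x, x') for (μ⊗μ)-almost every (x,x'). Then the map B ↦ A⁻¹B induces an automorphism of the measure algebra of (X, μ); equivalently, the σ-algebra A⁻¹(Borel(X)) equals Borel(X) modulo μ-null sets. -/

import Mathlib

open MeasureTheory

/-- An almost-everywhere isometry preserving a fully supported measure
induces an automorphism of the measure algebra: the σ-algebra
`A⁻¹(Borel X)` equals `Borel X` modulo `μ`-null sets. -/
theorem ae_isometry_measure_algebra_automorphism
    {X : Type*} [MetricSpace X] [CompactSpace X]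
    [MeasurableSpace X] [BorelSpace X]
    (μ : Measure X) [IsProbabilityMeasure μ]
    (hfull : ∀ U : Set X, IsOpen U → U.Nonempty → 0 < μ U)
    (A : X → X) (hA : Measurable A) (hinv : Measure.map A μ = μ)
    (hiso : ∀ᵐ p : X × X ∂(μ.prod μ), dist (A p.1) (A p.2) = dist p.1 p.2) :
    ∀ B : Set X, MeasurableSet B →
      ∃ C : Set X, MeasurableSet C ∧ μ (symmDiff B (A ⁻¹' C)) = 0 := by
  classical
  have hae : ∀ᵐ x ∂μ, ∀ᵐ y ∂μ, dist (A x) (A y) = dist x y :=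
    Measure.ae_ae_of_ae_prod hiso
  set S : Set X := {x | ∀ᵐ y ∂μ, dist (A x) (A y) = dist x y} with hSdef
  have hSnull : μ Sᶜ = 0 := hae
  -- a co-null set meets every nonempty open set
  have hmeet : ∀ (G : Set X), μ Gᶜ = 0 → ∀ U : Set X, IsOpen U → U.Nonempty →
      (U ∩ G).Nonempty := by
    intro G hG U hU hUne
    by_contra h
    rw [Set.not_nonempty_iff_eq_empty] at h
    have hsub : U ⊆ Gᶜ := fun x hx => fun hxG => Set.eq_empty_iff_forall_notMem.1 h x ⟨hx, hxG⟩
    have : μ U ≤ μ Gᶜ := measure_mono hsub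
    have hpos := hfull U hU hUne
    rw [hG] at this
    exact absurd (le_antisymm this (zero_le)) (ne_of_gt hpos)
  have hdense : Dense S := by
    intro x
    rw [mem_closure_iff]
    intro U hU hxU
    obtain ⟨y, hy⟩ := hmeet S hSnull U hU ⟨x, hxU⟩
    exact ⟨y, hy⟩
  -- A is isometric on S
  have hisoS : ∀ x ∈ S, ∀ x' ∈ S, dist (A x) (A x') = dist x x' := by
    intro x hx x' hx'
    have key : ∀ ε : ℝ, 0 < ε → |dist (A x) (A x') - dist x x'| ≤ 2 * ε := by
      intro ε hε
      have h1 : ∀ᵐ y ∂μ, dist (A x) (A y) = dist x y := hx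
      have h2 : ∀ᵐ y ∂μ, dist (A x') (A y) = dist x' y := hx'
      have h1' : μ {y | dist (A x) (A y) = dist x y}ᶜ = 0 := by
        rw [Set.compl_setOf]; exact ae_iff.1 h1
      have h2' : μ {y | dist (A x') (A y) = dist x' y}ᶜ = 0 := by
        rw [Set.compl_setOf]; exact ae_iff.1 h2
      have hG : μ ({y | dist (A x) (A y) = dist x y} ∩
          {y | dist (A x') (A y) = dist x' y})ᶜ = 0 := by
        rw [Set.compl_inter]
        exact measure_union_null h1' h2'
      obtain ⟨y, hyU, hy1, hy2⟩ := hmeet _ hG (Metric.ball x' ε) Metric.isOpen_ball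
        ⟨x', Metric.mem_ball_self hε⟩
      have hyd : dist x' y < ε := by
        rw [Metric.mem_ball, dist_comm] at hyU; exact hyU
      have t1 : dist (A x) (A x') ≤ dist (A x) (A y) + dist (A y) (A x') :=
        dist_triangle _ _ _
      have t2 : dist x x' ≤ dist x y + dist y x' := dist_triangle _ _ _
      have t3 : dist x y ≤ dist x x' + dist x' y := dist_triangle _ _ _
      have t4 : dist (A x) (A y) ≤ dist (A x) (A x') + dist (A x') (A y) :=
        dist_triangle _ _ _
      have e1 : dist (A x) (A y) = dist x y := hy1
      have e2 : dist (A x') (A y) = dist x' y := hy2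
      rw [dist_comm (A y) (A x')] at t1
      rw [dist_comm y x'] at t2
      rw [abs_le]
      constructor <;> linarith
    by_contra hne
    have habs : 0 < |dist (A x) (A x') - dist x x'| := by
      rw [abs_pos]; intro h; exact hne (by linarith)
    have := key (|dist (A x) (A x') - dist x x'| / 4) (by linarith)
    linarith
  -- extend A from S to an isometry T of X
  have h_e : IsUniformInducing ((↑) : S → X) :=
    isUniformEmbedding_subtype_val.isUniformInducing
  have h_dense : DenseRange ((↑) : S → X) := hdense.denseRange_val
  set f : S → X := fun s => A s with hfdef
  have hfiso : Isometry f := by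
    apply Isometry.of_dist_eq
    intro a b
    rw [Subtype.dist_eq]
    exact hisoS a a.2 b b.2
  have hfUC : UniformContinuous f := hfiso.uniformContinuous
  set T : X → X := (h_e.isDenseInducing h_dense).extend f with hTdef
  have hTcont : Continuous T :=
    (uniformContinuous_uniformly_extend h_e h_dense hfUC).continuous
  have hTeq : ∀ x ∈ S, T x = A x := by
    intro x hx
    exact uniformly_extend_of_ind h_e h_dense hfUC ⟨x, hx⟩
  have hTiso : Isometry T := by
    apply Isometry.of_dist_eq
    have heq : (fun p : X × X => dist (T p.1) (T p.2)) = fun p : X × X => dist p.1 p.2 := by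
      apply Continuous.ext_on (hdense.prod hdense)
      · exact (hTcont.comp continuous_fst).dist (hTcont.comp continuous_snd)
      · exact continuous_fst.dist continuous_snd
      · rintro ⟨a, b⟩ ⟨ha, hb⟩
        simp only
        rw [hTeq a ha, hTeq b hb]
        exact hisoS a ha b hb
    intro a b
    exact congrFun heq (a, b)
  have hclos := hTiso.isClosedEmbedding
  have hTmeas := hclos.measurableEmbedding
  intro B hB
  refine ⟨T '' B, hTmeas.measurableSet_image.2 hB, ?_⟩
  have hpre : T ⁻¹' (T '' B) = B := Set.preimage_image_eq B hTiso.injective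
  refine measure_mono_null ?_ hSnull
  intro x hx
  by_contra hxS
  rw [Set.notMem_compl_iff] at hxS
  have hTA : T x = A x := hTeq x hxS
  have hxiff : x ∈ A ⁻¹' (T '' B) ↔ x ∈ B := by
    rw [Set.mem_preimage, ← hTA, ← Set.mem_preimage, hpre]
  rw [Set.mem_symmDiff] at hx
  rcases hx with ⟨h1, h2⟩ | ⟨h1, h2⟩
  · exact h2 (hxiff.2 h1)
  · exact h2 (hxiff.1 h1)
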